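/- Let v₁,…,v₄ be trace-zero 2×2 complex matrices and r_{i₁⋯i_h} = -tr(v_{i₁}⋯v_{i_h}). Then 2•(v₁*v₂*v₃)*v₄ = -(r_{23}•(v₁*v₄) - r_{13}•(v₂*v₄) + r_{12}•(v₃*v₄) + r_{123}•v₄). -/
import Mathlib

open Matrix

theorem stmt_15 (v₁ v₂ v₃ v₄ : Matrix (Fin 2) (Fin 2) ℂ)
    (h₁ : trace v₁ = 0) (h₂ : trace v₂ = 0) (h₃ : trace v₃ = 0) (h₄ : trace v₄ = 0) :
    (2 : ℂ) • (v₁ * v₂ * v₃ * v₄) =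
      -((-(trace (v₂ * v₃))) • (v₁ * v₄) - (-(trace (v₁ * v₃))) • (v₂ * v₄)
          + (-(trace (v₁ * v₂))) • (v₃ * v₄)
          + (-(trace (v₁ * v₂ * v₃))) • v₄) := by
  rw [trace_fin_two] at h₁ h₂ h₃ h₄
  have e₁ : v₁ 1 1 = -(v₁ 0 0) := eq_neg_of_add_eq_zero_right h₁
  have e₂ : v₂ 1 1 = -(v₂ 0 0) := eq_neg_of_add_eq_zero_right h₂
  have e₃ : v₃ 1 1 = -(v₃ 0 0) := eq_neg_of_add_eq_zero_right h₃
  have e₄ : v₄ 1 1 = -(v₄ 0 0) := eq_neg_of_add_eq_zero_right h₄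
  ext i j
  simp only [Matrix.smul_apply, Matrix.mul_apply, Matrix.add_apply, Matrix.sub_apply,
    Matrix.neg_apply, trace_fin_two, Fin.sum_univ_two, smul_eq_mul]
  fin_cases i <;> fin_cases j <;>
    simp only [Fin.zero_eta, Fin.mk_one, e₁, e₂, e₃, e₄] <;> ring
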